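/- Let p₂ be a homogeneous quadratic form in n variables, p₁ a linear form, and p₀ ∈ ℝ, such that the 2×2 symmetric matrix [[p₂(x), p₁(x)], [p₁(x), p₀]] is positive semidefinite for all x ∈ ℝⁿ. Then there exists a 2×(n+1) matrix M(x) with polynomial entries such that M(x)·M(x)ᵀ = [[p₂(x), p₁(x)], [p₁(x), p₀]] for all x. -/

import Mathlib

open MvPolynomial

open Matrix


lemma deg_one_eq {n : ℕ} {d : Fin n →₀ ℕ} (h : d.degree = 1) :
    ∃ i : Fin n, d = Finsupp.single i 1 := by
  have hc : Multiset.card d.toMultiset = 1 := by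
    rw [Finsupp.card_toMultiset]; simpa [Finsupp.degree_apply, Finsupp.sum] using h
  obtain ⟨i, hi⟩ := Multiset.card_eq_one.mp hc
  refine ⟨i, ?_⟩
  have h2 := congrArg Multiset.toFinsupp hi
  rw [Finsupp.toMultiset_toFinsupp, Multiset.toFinsupp_singleton] at h2
  exact h2

lemma deg_two_eq {n : ℕ} {d : Fin n →₀ ℕ} (h : d.degree = 2) :
    ∃ i j : Fin n, d = Finsupp.single i 1 + Finsupp.single j 1 := by
  have hc : Multiset.card d.toMultiset = 2 := by
    rw [Finsupp.card_toMultiset]; simpa [Finsupp.degree_apply, Finsupp.sum] using h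
  obtain ⟨i, j, hij⟩ := Multiset.card_eq_two.mp hc
  refine ⟨i, j, ?_⟩
  have h2 := congrArg Multiset.toFinsupp hij
  rw [Finsupp.toMultiset_toFinsupp] at h2
  rw [h2, show ({i, j} : Multiset (Fin n)) = {i} + {j} from rfl,
    Multiset.toFinsupp_add, Multiset.toFinsupp_singleton, Multiset.toFinsupp_singleton]

lemma pair_single_eq {n : ℕ} {a b i j : Fin n}
    (h : Finsupp.single a 1 + Finsupp.single b 1 = Finsupp.single i 1 + Finsupp.single j 1) :
    (a = i ∧ b = j) ∨ (a = j ∧ b = i) := by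
  have ha : a = i ∨ a = j := by
    by_contra hc
    push_neg at hc
    have := DFunLike.congr_fun h a
    simp [Finsupp.single_apply, Ne.symm hc.1, Ne.symm hc.2] at this
  rcases ha with rfl | rfl
  · left
    have := add_left_cancel h
    rcases (Finsupp.single_eq_single_iff _ _ _ _).mp this with ⟨h1, _⟩ | ⟨h1, _⟩
    · exact ⟨rfl, h1⟩
    · exact absurd h1 one_ne_zero
  · right
    rw [add_comm (Finsupp.single i 1)] at h
    have := add_left_cancel h
    rcases (Finsupp.single_eq_single_iff _ _ _ _).mp this with ⟨h1, _⟩ | ⟨h1, _⟩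
    · exact ⟨rfl, h1⟩
    · exact absurd h1 one_ne_zero

lemma lin_repr {n : ℕ} {p : MvPolynomial (Fin n) ℝ} (h : p.IsHomogeneous 1) :
    ∃ v : Fin n → ℝ, ∀ x : Fin n → ℝ, eval x p = ∑ j, v j * x j := by
  refine ⟨fun j => coeff (Finsupp.single j 1) p, fun x => ?_⟩
  have hpoly : p = ∑ j, C (coeff (Finsupp.single j 1) p) * X j := by
    ext d
    rw [coeff_sum]
    simp only [coeff_C_mul, coeff_X', mul_ite, mul_one, mul_zero]
    by_cases hd : ∃ i, d = Finsupp.single i 1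
    · obtain ⟨i, rfl⟩ := hd
      rw [Finset.sum_eq_single i]
      · simp
      · intro b _ hb
        simp only [ite_eq_right_iff]
        intro hbd
        rcases (Finsupp.single_eq_single_iff _ _ _ _).mp hbd with ⟨h1, _⟩ | ⟨h1, _⟩
        · exact absurd h1 hb
        · exact absurd h1 one_ne_zero
      · simp
    · rw [h.coeff_eq_zero, Finset.sum_eq_zero]
      · intro b _
        simp only [ite_eq_right_iff]
        intro hbd
        exact absurd ⟨b, hbd.symm⟩ hd
      · intro hdeg
        exact hd (deg_one_eq hdeg)
  conv_lhs => rw [hpoly]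
  simp

lemma sum_ite_pair {n : ℕ} (i0 j0 : Fin n) (v : ℝ) :
    (∑ b : Fin n, ∑ c : Fin n, if b = i0 ∧ c = j0 then v else 0) = v := by
  simp [ite_and, Finset.sum_ite_eq']

lemma quad_repr {n : ℕ} {p : MvPolynomial (Fin n) ℝ} (h : p.IsHomogeneous 2) :
    ∃ A : Matrix (Fin n) (Fin n) ℝ, Aᵀ = A ∧
      ∀ x : Fin n → ℝ, eval x p = ∑ i, ∑ j, A i j * x i * x j := by
  set A : Matrix (Fin n) (Fin n) ℝ := Matrix.of fun i j =>
    if i = j then coeff (Finsupp.single i 1 + Finsupp.single j 1) p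
    else coeff (Finsupp.single i 1 + Finsupp.single j 1) p / 2 with hA
  have hAsymm : ∀ i j, A j i = A i j := by
    intro i j
    by_cases hij : i = j
    · subst hij; rfl
    · simp only [hA, Matrix.of_apply, if_neg hij, if_neg (Ne.symm hij)]
      rw [add_comm (Finsupp.single j 1)]
  have hsym : Aᵀ = A := by
    ext i j
    exact hAsymm i j
  refine ⟨A, hsym, fun x => ?_⟩
  have hpoly : p = ∑ i, ∑ j, C (A i j) * X i * X j := by
    ext d
    rw [coeff_sum]
    simp only [coeff_sum]
    have hmono : ∀ (i j : Fin n) (a : ℝ), C a * X i * X j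
        = monomial (Finsupp.single i 1 + Finsupp.single j 1) a := by
      intro i j a
      rw [C_mul_X_eq_monomial,
        show (X j : MvPolynomial (Fin n) ℝ) = monomial (Finsupp.single j 1) 1 from rfl,
        monomial_mul, mul_one]
    simp only [hmono, coeff_monomial]
    by_cases hd : ∃ i j, d = Finsupp.single i 1 + Finsupp.single j 1
    · obtain ⟨i, j, rfl⟩ := hd
      by_cases hij : i = j
      · subst hij
        have hptwise : ∀ b c : Fin n,
            (if Finsupp.single b 1 + Finsupp.single c 1
                = Finsupp.single i 1 + Finsupp.single i 1 then A b c else 0)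
            = (if b = i ∧ c = i then A i i else 0) := by
          intro b c
          by_cases hbc : Finsupp.single b 1 + Finsupp.single c 1
              = Finsupp.single i 1 + Finsupp.single i 1
          · rcases pair_single_eq hbc with ⟨rfl, rfl⟩ | ⟨rfl, rfl⟩ <;> simp [hbc]
          · rw [if_neg hbc, if_neg]
            rintro ⟨rfl, rfl⟩
            exact hbc rfl
        simp only [hptwise]
        rw [sum_ite_pair]
        simp [hA]
      · have hptwise : ∀ b c : Fin n,
            (if Finsupp.single b 1 + Finsupp.single c 1
                = Finsupp.single i 1 + Finsupp.single j 1 then A b c else 0)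
            = (if b = i ∧ c = j then A i j else 0) + (if b = j ∧ c = i then A j i else 0) := by
          intro b c
          by_cases hbc : Finsupp.single b 1 + Finsupp.single c 1
              = Finsupp.single i 1 + Finsupp.single j 1
          · rcases pair_single_eq hbc with ⟨rfl, rfl⟩ | ⟨rfl, rfl⟩
            · rw [if_pos hbc, if_pos ⟨rfl, rfl⟩, if_neg, add_zero]
              rintro ⟨rfl, -⟩
              exact hij rfl
            · rw [if_pos hbc, if_neg, if_pos ⟨rfl, rfl⟩, zero_add]
              rintro ⟨rfl, -⟩
              exact hij rfl
          · rw [if_neg hbc, if_neg, if_neg, add_zero]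
            · rintro ⟨rfl, rfl⟩
              exact hbc (add_comm _ _)
            · rintro ⟨rfl, rfl⟩
              exact hbc rfl
        simp only [hptwise, Finset.sum_add_distrib]
        rw [sum_ite_pair, sum_ite_pair, hAsymm i j]
        simp only [hA, Matrix.of_apply, if_neg hij]
        ring
    · rw [h.coeff_eq_zero, Finset.sum_eq_zero]
      · intro b _
        rw [Finset.sum_eq_zero]
        intro c _
        simp only [ite_eq_right_iff]
        intro hbd
        exact absurd ⟨b, c, hbd.symm⟩ hd
      · intro hdeg
        exact hd (deg_two_eq hdeg)
  conv_lhs => rw [hpoly]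
  simp

lemma psd2_quad {a b c : ℝ} (h : (!![a, b; b, c]).PosSemidef) (s t : ℝ) :
    0 ≤ a * s * s + 2 * b * s * t + c * t * t := by
  have := h.dotProduct_mulVec_nonneg ![s, t]
  simp [Matrix.mulVec, dotProduct, Fin.sum_univ_two] at this
  nlinarith [this]

lemma sum_sq_mulVec {n : ℕ} (B : Matrix (Fin n) (Fin n) ℝ) (x : Fin n → ℝ) :
    ∑ k, (∑ j, B k j * x j) ^ 2 = ∑ i, ∑ j, (Bᵀ * B) i j * x i * x j := by
  simp only [sq, Matrix.mul_apply, Matrix.transpose_apply, Finset.sum_mul, Finset.mul_sum]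
  rw [Finset.sum_comm]
  refine Finset.sum_congr rfl fun i _ => ?_
  rw [Finset.sum_comm]
  refine Finset.sum_congr rfl fun j _ => ?_
  refine Finset.sum_congr rfl fun k _ => ?_
  ring

/-- If `p₂` is a quadratic form, `p₁` a linear form and `p₀ ∈ ℝ` are such that the
`2×2` symmetric matrix `[[p₂(x), p₁(x)], [p₁(x), p₀]]` is positive semidefinite for all
`x ∈ ℝⁿ`, then there is a `2×(n+1)` polynomial matrix `M` with
`M(x)·M(x)ᵀ = [[p₂(x), p₁(x)], [p₁(x), p₀]]` for all `x`. -/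
theorem psd_two_by_two_polynomial_factorization (n : ℕ)
    (p₂ p₁ : MvPolynomial (Fin n) ℝ) (p₀ : ℝ)
    (h₂ : p₂.IsHomogeneous 2) (h₁ : p₁.IsHomogeneous 1)
    (hpsd : ∀ x : Fin n → ℝ,
      (!![MvPolynomial.eval x p₂, MvPolynomial.eval x p₁;
          MvPolynomial.eval x p₁, p₀]).PosSemidef) :
    ∃ M : Matrix (Fin 2) (Fin (n + 1)) (MvPolynomial (Fin n) ℝ),
      ∀ x : Fin n → ℝ,
        (MvPolynomial.eval x ((M * M.transpose) 0 0) = MvPolynomial.eval x p₂) ∧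
        (MvPolynomial.eval x ((M * M.transpose) 0 1) = MvPolynomial.eval x p₁) ∧
        (MvPolynomial.eval x ((M * M.transpose) 1 0) = MvPolynomial.eval x p₁) ∧
        (MvPolynomial.eval x ((M * M.transpose) 1 1) = p₀) := by
  obtain ⟨v, hv⟩ := lin_repr h₁
  obtain ⟨A, hAsym, hAv⟩ := quad_repr h₂
  have hp₀ : 0 ≤ p₀ := by simpa using psd2_quad (hpsd 0) 0 1
  have ha : ∀ x, 0 ≤ eval x p₂ := fun x => by simpa using psd2_quad (hpsd x) 1 0
  have hkey : ∀ x, (eval x p₁) ^ 2 ≤ eval x p₂ * p₀ := by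
    intro x
    rcases eq_or_lt_of_le hp₀ with hz | hpos
    · have h1 := psd2_quad (hpsd x) (-(eval x p₁)) (eval x p₂ + 2)
      rw [← hz] at h1
      nlinarith [ha x, sq_nonneg (eval x p₁)]
    · have h1 := psd2_quad (hpsd x) p₀ (-(eval x p₁))
      nlinarith [h1, hpos]
  have hb0 : p₀ = 0 → ∀ x, eval x p₁ = 0 := by
    intro hz x
    have := hkey x
    rw [hz, mul_zero] at this
    nlinarith [sq_nonneg (eval x p₁)]
  set A' : Matrix (Fin n) (Fin n) ℝ :=
    Matrix.of (fun i j => A i j - p₀⁻¹ * (v i * v j)) with hA'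
  have hA'eval : ∀ x : Fin n → ℝ,
      ∑ i, ∑ j, A' i j * x i * x j = eval x p₂ - p₀⁻¹ * (eval x p₁) ^ 2 := by
    intro x
    have e1 : ∑ i, ∑ j, (p₀⁻¹ * (v i * v j)) * x i * x j
        = p₀⁻¹ * (eval x p₁) ^ 2 := by
      have e2 : (eval x p₁) ^ 2 = ∑ i, ∑ j, (v i * x i) * (v j * x j) := by
        rw [hv, sq, Finset.sum_mul_sum]
      rw [e2, Finset.mul_sum]
      refine Finset.sum_congr rfl fun i _ => ?_
      rw [Finset.mul_sum]
      refine Finset.sum_congr rfl fun j _ => ?_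
      ring
    rw [hAv, ← e1, ← Finset.sum_sub_distrib]
    refine Finset.sum_congr rfl fun i _ => ?_
    rw [← Finset.sum_sub_distrib]
    refine Finset.sum_congr rfl fun j _ => ?_
    simp only [hA', Matrix.of_apply]
    ring
  have hexpand : ∀ (y : Fin n → ℝ), y ⬝ᵥ (A' *ᵥ y) = ∑ i, ∑ j, A' i j * y i * y j := by
    intro y
    simp only [dotProduct, Matrix.mulVec, Finset.mul_sum]
    refine Finset.sum_congr rfl fun i _ => ?_
    refine Finset.sum_congr rfl fun j _ => ?_
    ring
  have hA'psd : A'.PosSemidef := by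
    refine Matrix.PosSemidef.of_dotProduct_mulVec_nonneg ?_ ?_
    · ext i j
      simp only [Matrix.conjTranspose_apply, Matrix.of_apply, hA', star_trivial]
      have := congrFun (congrFun hAsym i) j
      simp only [Matrix.transpose_apply] at this
      rw [this]
      ring
    · intro y
      rw [show (star y : Fin n → ℝ) = y from funext fun i => star_trivial _]
      rw [hexpand, hA'eval]
      rcases eq_or_lt_of_le hp₀ with hz | hpos
      · rw [hb0 hz.symm y]
        simpa using ha y
      · have := hkey y
        have h2 : (eval y p₁) ^ 2 * p₀⁻¹ ≤ eval y p₂ := by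
          rw [← mul_le_mul_iff_left₀ hpos]
          calc (eval y p₁) ^ 2 * p₀⁻¹ * p₀ = (eval y p₁) ^ 2 := by
                field_simp
            _ ≤ eval y p₂ * p₀ := this
        linarith
  obtain ⟨B, hB⟩ : ∃ B : Matrix (Fin n) (Fin n) ℝ, A' = Bᴴ * B := by
    open scoped MatrixOrder in
    obtain ⟨B, hB⟩ := CStarAlgebra.nonneg_iff_eq_star_mul_self.mp hA'psd.nonneg
    exact ⟨B, hB⟩
  have hBt : Bᴴ = Bᵀ := by
    ext i j
    simp [Matrix.conjTranspose_apply]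
  rw [hBt] at hB
  set row0 : Fin (n + 1) → MvPolynomial (Fin n) ℝ :=
    Fin.snoc (fun k => ∑ j, C (B k j) * X j) (C (Real.sqrt p₀)⁻¹ * p₁) with hrow0
  set row1 : Fin (n + 1) → MvPolynomial (Fin n) ℝ :=
    Fin.snoc (fun _ => 0) (C (Real.sqrt p₀)) with hrow1
  refine ⟨Matrix.of ![row0, row1], fun x => ?_⟩
  have hsqrt : Real.sqrt p₀ * Real.sqrt p₀ = p₀ := Real.mul_self_sqrt hp₀
  have hM0 : ∀ j, (Matrix.of ![row0, row1]) 0 j = row0 j := fun j => rfl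
  have hM1 : ∀ j, (Matrix.of ![row0, row1]) 1 j = row1 j := fun j => rfl
  have hr0 : ∀ k : Fin n, eval x (row0 (Fin.castSucc k)) = ∑ j, B k j * x j := by
    intro k
    simp [hrow0, Fin.snoc_castSucc, map_sum]
  have hr0l : eval x (row0 (Fin.last n)) = (Real.sqrt p₀)⁻¹ * eval x p₁ := by
    simp [hrow0]
  have hr1 : ∀ k : Fin n, row1 (Fin.castSucc k) = 0 := by
    intro k
    simp [hrow1]
  have hr1l : row1 (Fin.last n) = C (Real.sqrt p₀) := by
    simp [hrow1]
  have hbz : p₀ = 0 → eval x p₁ = 0 := fun hz => hb0 hz x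
  refine ⟨?_, ?_, ?_, ?_⟩
  · rw [Matrix.mul_apply]
    simp only [Matrix.transpose_apply, hM0]
    rw [map_sum, Fin.sum_univ_castSucc]
    simp only [_root_.map_mul, hr0, hr0l]
    have hQ : ∑ k : Fin n, (∑ j, B k j * x j) * (∑ j, B k j * x j)
        = ∑ i, ∑ j, A' i j * x i * x j := by
      rw [hB, ← sum_sq_mulVec]
      refine Finset.sum_congr rfl fun k _ => (sq _).symm
    rw [hQ, hA'eval]
    have hinv : (Real.sqrt p₀)⁻¹ * eval x p₁ * ((Real.sqrt p₀)⁻¹ * eval x p₁)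
        = p₀⁻¹ * (eval x p₁) ^ 2 := by
      rw [show (Real.sqrt p₀)⁻¹ * eval x p₁ * ((Real.sqrt p₀)⁻¹ * eval x p₁)
          = (Real.sqrt p₀ * Real.sqrt p₀)⁻¹ * (eval x p₁) ^ 2 by rw [mul_inv]; ring, hsqrt]
    rw [hinv]
    ring
  · rw [Matrix.mul_apply]
    simp only [Matrix.transpose_apply, hM0, hM1]
    rw [map_sum, Fin.sum_univ_castSucc]
    simp only [_root_.map_mul, hr1, hr1l, map_zero, mul_zero, Finset.sum_const_zero, zero_add,
      hr0l, eval_C]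
    rcases eq_or_lt_of_le hp₀ with hz | hpos
    · rw [hbz hz.symm]
      ring
    · have hs : (Real.sqrt p₀) ≠ 0 := by positivity
      field_simp
  · rw [Matrix.mul_apply]
    simp only [Matrix.transpose_apply, hM0, hM1]
    rw [map_sum, Fin.sum_univ_castSucc]
    simp only [_root_.map_mul, hr1, hr1l, map_zero, zero_mul, Finset.sum_const_zero, zero_add,
      hr0l, eval_C]
    rcases eq_or_lt_of_le hp₀ with hz | hpos
    · rw [hbz hz.symm]
      ring
    · have hs : (Real.sqrt p₀) ≠ 0 := by positivity
      field_simp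
  · rw [Matrix.mul_apply]
    simp only [Matrix.transpose_apply, hM1]
    rw [map_sum, Fin.sum_univ_castSucc]
    simp only [_root_.map_mul, hr1, hr1l, map_zero, zero_mul, mul_zero,
      Finset.sum_const_zero, zero_add, eval_C]
    exact hsqrt
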